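/- Let a ∈ ℝ^d with a ≠ 0 and let f : ℝ^d → ℝ be given by f(x) = log(1 + exp(−⟨a, x⟩)). Then f is twice differentiable, its Hessian is (‖a‖³/(6√3))-Lipschitz in operator norm, i.e., ‖∇²f(x) − ∇²f(y)‖ ≤ (‖a‖³/(6√3))·‖x − y‖ for all x, y ∈ ℝ^d, and for every x ∈ ℝ^d: ⟨∇f(x), ∇²f(x)∇f(x)⟩ / ‖∇f(x)‖² ≤ √((4/27)·‖a‖³ · ‖∇f(x)‖). -/

import Mathlib

open scoped RealInnerProductSpace

noncomputable def qlog (t : ℝ) : ℝ := -(1 + Real.exp t)⁻¹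

noncomputable def plog (t : ℝ) : ℝ := Real.exp t / (1 + Real.exp t) ^ 2

lemma one_add_exp_pos (t : ℝ) : (0:ℝ) < 1 + Real.exp t := by positivity

lemma hasDerivAt_qlog (t : ℝ) : HasDerivAt qlog (plog t) t := by
  have h : HasDerivAt (fun t : ℝ => 1 + Real.exp t) (Real.exp t) t :=
    (Real.hasDerivAt_exp t).const_add 1
  have := (h.inv (ne_of_gt (one_add_exp_pos t))).neg
  refine this.congr_deriv ?_
  simp only [plog, neg_div, neg_neg]

lemma hasDerivAt_plog (t : ℝ) :
    HasDerivAt plog (Real.exp t * (1 - Real.exp t) / (1 + Real.exp t) ^ 3) t := by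
  have h : HasDerivAt (fun t : ℝ => 1 + Real.exp t) (Real.exp t) t :=
    (Real.hasDerivAt_exp t).const_add 1
  have h2 : HasDerivAt (fun t : ℝ => (1 + Real.exp t) ^ 2)
      (2 * (1 + Real.exp t) * Real.exp t) t := by
    simpa using h.fun_pow 2
  have := (Real.hasDerivAt_exp t).div h2 (by positivity)
  refine this.congr_deriv ?_
  have hp := one_add_exp_pos t
  field_simp
  ring

lemma plog_deriv_bound (t : ℝ) :
    |Real.exp t * (1 - Real.exp t) / (1 + Real.exp t) ^ 3| ≤ 1 / (6 * Real.sqrt 3) := by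
  set c := Real.sqrt 3 with hc
  have hc3 : c ^ 2 = 3 := Real.sq_sqrt (by norm_num)
  have hcpos : (0:ℝ) < c := Real.sqrt_pos.mpr (by norm_num)
  set v := Real.exp t with hv
  have hvpos : (0:ℝ) < v := Real.exp_pos t
  have hdpos : (0:ℝ) < (1 + v) ^ 3 := by positivity
  rw [abs_div, abs_of_pos hdpos, div_le_div_iff₀ hdpos (by positivity)]
  have key : |v * (1 - v)| * (6 * c) ≤ (1 + v) ^ 3 := by
    rcases le_total v 1 with hv1 | hv1
    · rw [abs_of_nonneg (by nlinarith)]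
      have h74 : (0:ℝ) ≤ v + 7 + 4 * c := by positivity
      nlinarith [mul_nonneg (sq_nonneg (v - 2 + c)) h74]
    · rw [abs_of_nonpos (by nlinarith)]
      have h74 : (0:ℝ) ≤ v + 7 - 4 * c := by nlinarith [sq_nonneg (c - 7/4)]
      nlinarith [mul_nonneg (sq_nonneg (v - 2 - c)) h74]
  linarith [key]

lemma plog_lipschitz (s t : ℝ) :
    |plog s - plog t| ≤ 1 / (6 * Real.sqrt 3) * |s - t| := by
  have := Convex.norm_image_sub_le_of_norm_hasDerivWithin_le
    (f := plog) (f' := fun u => Real.exp u * (1 - Real.exp u) / (1 + Real.exp u) ^ 3)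
    (C := 1 / (6 * Real.sqrt 3)) (s := Set.univ)
    (fun u _ => (hasDerivAt_plog u).hasDerivWithinAt)
    (fun u _ => by simpa only [Real.norm_eq_abs] using plog_deriv_bound u)
    convex_univ (Set.mem_univ t) (Set.mem_univ s)
  simpa [Real.norm_eq_abs] using this

/-- the logistic function `f(x) = log(1 + e^{−⟨a,x⟩})` is twice
differentiable, has `‖a‖³/(6√3)`-Lipschitz Hessian, and satisfies the
vanishing directional curvature bound with constant `(4/27)‖a‖³`. -/
theorem logistic_properties {d : ℕ} (a : EuclideanSpace ℝ (Fin d)) (ha : a ≠ 0)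
    (f : EuclideanSpace ℝ (Fin d) → ℝ)
    (hf : ∀ x, f x = Real.log (1 + Real.exp (-⟪a, x⟫))) :
    (Differentiable ℝ f ∧ Differentiable ℝ (gradient f)) ∧
    (∀ x y : EuclideanSpace ℝ (Fin d),
      ‖fderiv ℝ (gradient f) x - fderiv ℝ (gradient f) y‖
        ≤ (‖a‖^3 / (6 * Real.sqrt 3)) * ‖x - y‖) ∧
    (∀ x : EuclideanSpace ℝ (Fin d),
      ⟪gradient f x, fderiv ℝ (gradient f) x (gradient f x)⟫ / ‖gradient f x‖^2
        ≤ Real.sqrt ((4/27) * ‖a‖^3 * ‖gradient f x‖)) := by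
  have hfe : f = fun x => Real.log (1 + Real.exp (-⟪a, x⟫)) := funext hf
  -- derivative of the scalar logistic loss
  have hφ : ∀ t : ℝ, HasDerivAt (fun t : ℝ => Real.log (1 + Real.exp (-t))) (qlog t) t := by
    intro t
    have h1 : HasDerivAt (fun t : ℝ => 1 + Real.exp (-t)) (-Real.exp (-t)) t := by
      simpa using (((hasDerivAt_neg t).exp).const_add 1)
    have := h1.log (ne_of_gt (by positivity))
    convert this using 1
    rw [Real.exp_neg]
    have he := Real.exp_pos t
    field_simp [qlog]
    simp only [qlog]
    field_simp
    ring
  have hs : ∀ x : EuclideanSpace ℝ (Fin d),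
      HasFDerivAt (fun x : EuclideanSpace ℝ (Fin d) => (⟪a, x⟫ : ℝ)) (innerSL ℝ a) x :=
    fun x => (innerSL ℝ a).hasFDerivAt
  -- gradient
  have hgrad : ∀ x, HasGradientAt f (qlog ⟪a, x⟫ • a) x := by
    intro x
    rw [hasGradientAt_iff_hasFDerivAt]
    have hcomp := (hφ ⟪a, x⟫).comp_hasFDerivAt x (hs x)
    rw [hfe]
    refine hcomp.congr_fderiv ?_
    ext v
    simp [InnerProductSpace.toDual_apply_apply, real_inner_smul_left, mul_comm]
  have hgradeq : gradient f = fun x => qlog ⟪a, x⟫ • a := gradient_eq hgrad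
  -- Hessian
  set M : EuclideanSpace ℝ (Fin d) →L[ℝ] EuclideanSpace ℝ (Fin d) :=
    (innerSL ℝ a).smulRight a with hM
  have hH : ∀ x, HasFDerivAt (gradient f) (plog ⟪a, x⟫ • M) x := by
    intro x
    rw [hgradeq]
    have hq := ((hasDerivAt_qlog ⟪a, x⟫).comp_hasFDerivAt x (hs x)).smul_const a
    refine hq.congr_fderiv ?_
    refine ContinuousLinearMap.ext fun v => ?_
    simp only [hM, ContinuousLinearMap.smulRight_apply, ContinuousLinearMap.smul_apply,
      ContinuousLinearMap.coe_smul', Pi.smul_apply, innerSL_apply_apply]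
    rw [smul_smul, smul_eq_mul]
  have hfd : ∀ x, fderiv ℝ (gradient f) x = plog ⟪a, x⟫ • M := fun x => (hH x).fderiv
  have hMnorm : ‖M‖ = ‖a‖ * ‖a‖ := by
    rw [hM, ContinuousLinearMap.norm_smulRight_apply, innerSL_apply_norm]
  refine ⟨⟨fun x => ((hgrad x).hasFDerivAt).differentiableAt,
      fun x => (hH x).differentiableAt⟩, ?_, ?_⟩
  · intro x y
    rw [hfd, hfd, show plog ⟪a, x⟫ • M - plog ⟪a, y⟫ • M = (plog ⟪a, x⟫ - plog ⟪a, y⟫) • M from (sub_smul _ _ _).symm, norm_smul, hMnorm, Real.norm_eq_abs]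
    have h1 := plog_lipschitz ⟪a, x⟫ ⟪a, y⟫
    have h2 : |(⟪a, x⟫:ℝ) - ⟪a, y⟫| ≤ ‖a‖ * ‖x - y‖ := by
      rw [← inner_sub_right]
      exact abs_real_inner_le_norm a (x - y)
    have hC : (0:ℝ) < 6 * Real.sqrt 3 := by positivity
    have : |plog ⟪a, x⟫ - plog ⟪a, y⟫| ≤ 1 / (6 * Real.sqrt 3) * (‖a‖ * ‖x - y‖) := by
      refine h1.trans ?_
      exact mul_le_mul_of_nonneg_left h2 (by positivity)
    calc |plog ⟪a, x⟫ - plog ⟪a, y⟫| * (‖a‖ * ‖a‖)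
        ≤ 1 / (6 * Real.sqrt 3) * (‖a‖ * ‖x - y‖) * (‖a‖ * ‖a‖) :=
          mul_le_mul_of_nonneg_right this (by positivity)
      _ = ‖a‖ ^ 3 / (6 * Real.sqrt 3) * ‖x - y‖ := by ring
  · intro x
    set t : ℝ := ⟪a, x⟫
    have hexp := Real.exp_pos t
    have h1p := one_add_exp_pos t
    have hq0 : qlog t < 0 := by
      simp only [qlog]
      simp [inv_pos.mpr h1p]
    have hanorm : (0:ℝ) < ‖a‖ := norm_pos_iff.mpr ha
    have hgx : gradient f x = qlog t • a := by rw [hgradeq]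
    have hMa : M (qlog t • a) = (qlog t * ‖a‖ ^ 2) • a := by
      simp only [hM, ContinuousLinearMap.smulRight_apply, innerSL_apply_apply]
      rw [real_inner_smul_right, real_inner_self_eq_norm_sq]
    have happ : fderiv ℝ (gradient f) x (gradient f x)
        = (plog t * (qlog t * ‖a‖ ^ 2)) • a := by
      rw [hfd, hgx, ContinuousLinearMap.smul_apply, hMa, smul_smul]
    have hinner : (⟪gradient f x, fderiv ℝ (gradient f) x (gradient f x)⟫ : ℝ)
        = qlog t ^ 2 * plog t * ‖a‖ ^ 4 := by
      rw [happ, hgx, real_inner_smul_left, real_inner_smul_right,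
        real_inner_self_eq_norm_sq]
      ring
    have hnorm : ‖gradient f x‖ = -qlog t * ‖a‖ := by
      rw [hgx, norm_smul, Real.norm_eq_abs, abs_of_neg hq0]
    have hql : (0:ℝ) < -qlog t := neg_pos.mpr hq0
    have hLHS : (⟪gradient f x, fderiv ℝ (gradient f) x (gradient f x)⟫ : ℝ)
        / ‖gradient f x‖ ^ 2 = plog t * ‖a‖ ^ 2 := by
      rw [hinner, hnorm]
      have : qlog t ≠ 0 := ne_of_lt hq0
      field_simp
    rw [hLHS, hnorm]
    have hplog_pos : (0:ℝ) < plog t := by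
      simp only [plog]; positivity
    rw [show -qlog t = (1 + Real.exp t)⁻¹ by simp [qlog]]
    rw [Real.le_sqrt (by positivity) (by positivity)]
    have hkey : plog t ^ 2 ≤ 4 / 27 * (1 + Real.exp t)⁻¹ := by
      rw [plog, div_pow, div_le_iff₀ (by positivity), mul_comm (4/27 : ℝ),
        inv_mul_eq_div, div_mul_eq_mul_div, le_div_iff₀ h1p]
      nlinarith [sq_nonneg (Real.exp t - 2), hexp]
    calc (plog t * ‖a‖ ^ 2) ^ 2 = plog t ^ 2 * ‖a‖ ^ 4 := by ring
      _ ≤ 4 / 27 * (1 + Real.exp t)⁻¹ * ‖a‖ ^ 4 :=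
          mul_le_mul_of_nonneg_right hkey (by positivity)
      _ = 4 / 27 * ‖a‖ ^ 3 * ((1 + Real.exp t)⁻¹ * ‖a‖) := by ring
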